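/- Fix θ ∈ ℝ^{k+1}. If either (a) φ_{0U}(θ) < ∞ and 1 − γ_{+U}(θ) > 0 for every nonempty U ⊆ J, or (b) there is a subset 𝒜 of the collection 𝒦 of nonempty subsets of J with γ_{+U}(θ) < 1 and γ_{0U}(θ) < 1 for every U ∈ 𝒦∖𝒜 and φ_{+U'}(θ) < ∞ and φ_{0U'}(θ) < ∞ for every U' ∈ 𝒜, then the full stationary moment generating function is finite: φ(θ) < ∞. -/

import Mathlib

open Filter Topology
open scoped ENNReal

noncomputable section

/-- Traffic intensity ρ = λ / Σ μᵢ. -/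
def rho (k : ℕ) (lam : ℝ) (μ : Fin k → ℝ) : ℝ := lam / ∑ i, μ i

/-- Index set of the shortest queues: the zero coordinates of the difference vector. -/
def zeroSet (k : ℕ) (y : Fin k → ℕ) : Finset (Fin k) :=
  Finset.univ.filter (fun i => y i = 0)

/-- One-step transition probability of the uniformized JSQ chain `Z = (M, Y)` on
`ℕ × (Fin k → ℕ)`, where `M` is the minimum queue length and `Y` the vector of
differences from the minimum. -/
def jsqP (k : ℕ) (lam : ℝ) (μ : Fin k → ℝ) (s s' : ℕ × (Fin k → ℕ)) : ℝ :=
  (if (zeroSet k s.2).card = 1 then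
      (if s' = (s.1 + 1, fun j => s.2 j - 1) then lam else 0)
    else
      ∑ i ∈ zeroSet k s.2,
        (if s' = (s.1, Function.update s.2 i 1) then lam / (zeroSet k s.2).card else 0))
  + (∑ j ∈ (zeroSet k s.2)ᶜ,
      (if s' = (s.1, Function.update s.2 j (s.2 j - 1)) then μ j else 0))
  + (∑ i ∈ zeroSet k s.2,
      (if s' = (if s.1 = 0 then s else (s.1 - 1, fun j => if j = i then 0 else s.2 j + 1))
        then μ i else 0))

/-- The exponential weight `e^{θ·Z}` for `θ ∈ ℝ^{k+1}` and a state `Z = (m, y)`. -/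
def expWeight (k : ℕ) (θ : Fin (k + 1) → ℝ) (s : ℕ × (Fin k → ℕ)) : ℝ :=
  Real.exp (θ 0 * (s.1 : ℝ) + ∑ i : Fin k, θ i.succ * (s.2 i : ℝ))

/-- The stationary moment generating function `φ(θ) = E[e^{θ·Z}] ∈ [0,∞]`. -/
def phi (k : ℕ) (π : ℕ × (Fin k → ℕ) → ℝ) (θ : Fin (k + 1) → ℝ) : ℝ≥0∞ :=
  ∑' s : ℕ × (Fin k → ℕ), ENNReal.ofReal (π s * expWeight k θ s)

/-- `φ_{+U}(θ) = E[e^{θ·Z} 1(Z ∈ S_{+U})]`. -/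
def phiPlus (k : ℕ) (π : ℕ × (Fin k → ℕ) → ℝ) (U : Finset (Fin k))
    (θ : Fin (k + 1) → ℝ) : ℝ≥0∞ :=
  ∑' s : ℕ × (Fin k → ℕ),
    if 1 ≤ s.1 ∧ zeroSet k s.2 = U then ENNReal.ofReal (π s * expWeight k θ s) else 0

/-- `φ_{0U}(θ) = E[e^{θ·Z} 1(Z ∈ S_{0U})]`. -/
def phiZero (k : ℕ) (π : ℕ × (Fin k → ℕ) → ℝ) (U : Finset (Fin k))
    (θ : Fin (k + 1) → ℝ) : ℝ≥0∞ :=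
  ∑' s : ℕ × (Fin k → ℕ),
    if s.1 = 0 ∧ zeroSet k s.2 = U then ENNReal.ofReal (π s * expWeight k θ s) else 0

/-- The mgf `γ_{+U}(θ)` of the one-step increment from states in `S_{+U}`. -/
def gammaPlus (k : ℕ) (lam : ℝ) (μ : Fin k → ℝ) (U : Finset (Fin k))
    (θ : Fin (k + 1) → ℝ) : ℝ :=
  (if U.card = 1 then lam * Real.exp (θ 0 - ∑ j ∈ Uᶜ, θ j.succ)
    else ∑ i ∈ U, (lam / U.card) * Real.exp (θ i.succ))
  + ∑ j ∈ Uᶜ, μ j * Real.exp (-θ j.succ)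
  + ∑ i ∈ U, μ i * Real.exp (-θ 0 + ∑ j ∈ Finset.univ.erase i, θ j.succ)

/-- The mgf `γ_{0U}(θ)` of the one-step increment from states in `S_{0U}`. -/
def gammaZero (k : ℕ) (lam : ℝ) (μ : Fin k → ℝ) (U : Finset (Fin k))
    (θ : Fin (k + 1) → ℝ) : ℝ :=
  (if U.card = 1 then lam * Real.exp (θ 0 - ∑ j ∈ Uᶜ, θ j.succ)
    else ∑ i ∈ U, (lam / U.card) * Real.exp (θ i.succ))
  + ∑ j ∈ Uᶜ, μ j * Real.exp (-θ j.succ)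
  + ∑ i ∈ U, μ i

end

section JSQAux

variable {k : ℕ}

lemma mem_zeroSet {y : Fin k → ℕ} {i : Fin k} : i ∈ zeroSet k y ↔ y i = 0 := by
  simp [zeroSet]

lemma tsum_ofReal_ind (t : ℕ × (Fin k → ℕ)) (c : ℝ) (h : ℕ × (Fin k → ℕ) → ℝ≥0∞) :
    ∑' s' : ℕ × (Fin k → ℕ), ENNReal.ofReal (if s' = t then c else 0) * h s'
      = ENNReal.ofReal c * h t := by
  rw [← tsum_ite_eq t (fun _ => ENNReal.ofReal c * h t)]
  refine tsum_congr fun s' => ?_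
  by_cases hs : s' = t <;> simp [hs]

lemma tsum_ofReal_ind_sum {ι : Type*} (F : Finset ι) (t : ι → ℕ × (Fin k → ℕ)) (c : ι → ℝ)
    (hc : ∀ i ∈ F, 0 ≤ c i) (h : ℕ × (Fin k → ℕ) → ℝ≥0∞) :
    ∑' s' : ℕ × (Fin k → ℕ), ENNReal.ofReal (∑ i ∈ F, if s' = t i then c i else 0) * h s'
      = ∑ i ∈ F, ENNReal.ofReal (c i) * h (t i) := by
  have e : ∀ s', ENNReal.ofReal (∑ i ∈ F, if s' = t i then c i else 0) * h s'
      = ∑ i ∈ F, ENNReal.ofReal (if s' = t i then c i else 0) * h s' := by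
    intro s'
    rw [ENNReal.ofReal_sum_of_nonneg (fun i hi => by split <;> simp [hc i hi]), Finset.sum_mul]
  rw [tsum_congr e, Summable.tsum_finsetSum (fun i _ => ENNReal.summable)]
  exact Finset.sum_congr rfl fun i _ => tsum_ofReal_ind _ _ _

variable (lam : ℝ) (μ : Fin k → ℝ)

lemma tsum_jsqP_mul (hlam : 0 ≤ lam) (hμ : ∀ i, 0 ≤ μ i) (s : ℕ × (Fin k → ℕ))
    (h : ℕ × (Fin k → ℕ) → ℝ≥0∞) :
    ∑' s', ENNReal.ofReal (jsqP k lam μ s s') * h s'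
    = (if (zeroSet k s.2).card = 1 then
          ENNReal.ofReal lam * h (s.1 + 1, fun j => s.2 j - 1)
        else ∑ i ∈ zeroSet k s.2,
          ENNReal.ofReal (lam / (zeroSet k s.2).card) * h (s.1, Function.update s.2 i 1))
      + ∑ j ∈ (zeroSet k s.2)ᶜ,
          ENNReal.ofReal (μ j) * h (s.1, Function.update s.2 j (s.2 j - 1))
      + ∑ i ∈ zeroSet k s.2,
          ENNReal.ofReal (μ i) *
            h (if s.1 = 0 then s else (s.1 - 1, fun j => if j = i then 0 else s.2 j + 1)) := by
  have hsplit : ∀ s' : ℕ × (Fin k → ℕ), ENNReal.ofReal (jsqP k lam μ s s') * h s'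
      = ENNReal.ofReal ((if (zeroSet k s.2).card = 1 then
            (if s' = (s.1 + 1, fun j => s.2 j - 1) then lam else 0)
          else ∑ i ∈ zeroSet k s.2,
            (if s' = (s.1, Function.update s.2 i 1) then lam / (zeroSet k s.2).card else 0))) * h s'
        + ENNReal.ofReal (∑ j ∈ (zeroSet k s.2)ᶜ,
            (if s' = (s.1, Function.update s.2 j (s.2 j - 1)) then μ j else 0)) * h s'
        + ENNReal.ofReal (∑ i ∈ zeroSet k s.2,
            (if s' = (if s.1 = 0 then s else (s.1 - 1, fun j => if j = i then 0 else s.2 j + 1))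
              then μ i else 0)) * h s' := by
    intro s'
    have hA0 : (0:ℝ) ≤ (if (zeroSet k s.2).card = 1 then
            (if s' = (s.1 + 1, fun j => s.2 j - 1) then lam else 0)
          else ∑ i ∈ zeroSet k s.2,
            (if s' = (s.1, Function.update s.2 i 1) then lam / (zeroSet k s.2).card else 0)) := by
      split_ifs <;>
        first
          | exact hlam
          | rfl
          | exact Finset.sum_nonneg fun i _ => by
              split_ifs <;> simp [div_nonneg hlam (Nat.cast_nonneg _)]
    have hB0 : (0:ℝ) ≤ ∑ j ∈ (zeroSet k s.2)ᶜ,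
        (if s' = (s.1, Function.update s.2 j (s.2 j - 1)) then μ j else 0) :=
      Finset.sum_nonneg fun j _ => by split_ifs <;> simp [hμ j]
    have hC0 : (0:ℝ) ≤ ∑ i ∈ zeroSet k s.2,
        (if s' = (if s.1 = 0 then s else (s.1 - 1, fun j => if j = i then 0 else s.2 j + 1))
          then μ i else 0) :=
      Finset.sum_nonneg fun i _ => by split_ifs <;> simp [hμ i]
    rw [jsqP, ENNReal.ofReal_add (add_nonneg hA0 hB0) hC0, ENNReal.ofReal_add hA0 hB0,
      add_mul, add_mul]
  rw [tsum_congr hsplit, ENNReal.tsum_add, ENNReal.tsum_add]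
  congr 1
  · congr 1
    · by_cases hcard : (zeroSet k s.2).card = 1
      · simp only [hcard, if_true]
        exact tsum_ofReal_ind _ _ _
      · simp only [hcard, if_false]
        exact tsum_ofReal_ind_sum _ _ _
          (fun i _ => div_nonneg hlam (Nat.cast_nonneg _)) _
    · exact tsum_ofReal_ind_sum _ _ _ (fun j _ => hμ j) _
  · exact tsum_ofReal_ind_sum _ _ _ (fun i _ => hμ i) _

variable (θ : Fin (k + 1) → ℝ)

lemma sum_theta_erase (y : Fin k → ℕ) {i : Fin k} (hi : y i = 0) :
    ∑ j : Fin k, θ j.succ * (y j : ℝ) = ∑ j ∈ Finset.univ.erase i, θ j.succ * (y j : ℝ) := by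
  rw [← Finset.add_sum_erase _ (fun j => θ j.succ * (y j : ℝ)) (Finset.mem_univ i), hi]
  simp

lemma expWeight_E1 (m : ℕ) (y : Fin k → ℕ) (hcard : (zeroSet k y).card = 1) :
    expWeight k θ (m + 1, fun j => y j - 1)
      = Real.exp (θ 0 - ∑ j ∈ (zeroSet k y)ᶜ, θ j.succ) * expWeight k θ (m, y) := by
  rw [expWeight, expWeight, ← Real.exp_add]
  congr 1
  have hsum : ∑ j : Fin k, θ j.succ * ((y j - 1 : ℕ) : ℝ)
      = ∑ j : Fin k, (θ j.succ * (y j : ℝ) - if j ∈ (zeroSet k y)ᶜ then θ j.succ else 0) := by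
    refine Finset.sum_congr rfl fun j _ => ?_
    by_cases hj : j ∈ zeroSet k y
    · have hyj : y j = 0 := mem_zeroSet.mp hj
      simp [hyj, hj]
    · have hyj : y j ≠ 0 := fun h => hj (mem_zeroSet.mpr h)
      have hc : ((y j - 1 : ℕ) : ℝ) = (y j : ℝ) - 1 := by
        rw [Nat.cast_sub (Nat.one_le_iff_ne_zero.mpr hyj)]; simp
      rw [hc]
      simp only [Finset.mem_compl, hj, not_false_iff, if_true]
      ring
  rw [hsum, Finset.sum_sub_distrib, Finset.sum_ite_mem, Finset.univ_inter]
  push_cast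
  ring

lemma expWeight_E2 (m : ℕ) (y : Fin k → ℕ) {i : Fin k} (hi : y i = 0) :
    expWeight k θ (m, Function.update y i 1)
      = Real.exp (θ i.succ) * expWeight k θ (m, y) := by
  rw [expWeight, expWeight, ← Real.exp_add]
  congr 1
  rw [← Finset.add_sum_erase _ (fun j => θ j.succ * ((Function.update y i 1 j : ℕ) : ℝ))
      (Finset.mem_univ i), sum_theta_erase θ y hi]
  have herase : ∑ j ∈ Finset.univ.erase i, θ j.succ * ((Function.update y i 1 j : ℕ) : ℝ)
      = ∑ j ∈ Finset.univ.erase i, θ j.succ * (y j : ℝ) :=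
    Finset.sum_congr rfl fun j hj => by
      rw [Function.update_of_ne (Finset.ne_of_mem_erase hj)]
  rw [herase, Function.update_self]
  push_cast
  ring

lemma expWeight_E3 (m : ℕ) (y : Fin k → ℕ) {j : Fin k} (hj : y j ≠ 0) :
    expWeight k θ (m, Function.update y j (y j - 1))
      = Real.exp (-θ j.succ) * expWeight k θ (m, y) := by
  rw [expWeight, expWeight, ← Real.exp_add]
  congr 1
  rw [← Finset.add_sum_erase _ (fun l => θ l.succ * ((Function.update y j (y j - 1) l : ℕ) : ℝ))
      (Finset.mem_univ j),
    ← Finset.add_sum_erase _ (fun l => θ l.succ * ((y l : ℕ) : ℝ)) (Finset.mem_univ j)]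
  have herase : ∑ l ∈ Finset.univ.erase j, θ l.succ * ((Function.update y j (y j - 1) l : ℕ) : ℝ)
      = ∑ l ∈ Finset.univ.erase j, θ l.succ * (y l : ℝ) :=
    Finset.sum_congr rfl fun l hl => by
      rw [Function.update_of_ne (Finset.ne_of_mem_erase hl)]
  rw [herase, Function.update_self]
  have hc : ((y j - 1 : ℕ) : ℝ) = (y j : ℝ) - 1 := by
    rw [Nat.cast_sub (Nat.one_le_iff_ne_zero.mpr hj)]; simp
  rw [hc]
  ring

lemma expWeight_E4 (m : ℕ) (y : Fin k → ℕ) {i : Fin k} (hi : y i = 0) :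
    expWeight k θ (m, fun j => if j = i then 0 else y j + 1)
      = Real.exp (-θ 0 + ∑ j ∈ Finset.univ.erase i, θ j.succ) * expWeight k θ (m + 1, y) := by
  rw [expWeight, expWeight, ← Real.exp_add]
  congr 1
  rw [← Finset.add_sum_erase _
      (fun j => θ j.succ * (((if j = i then 0 else y j + 1 : ℕ)) : ℝ)) (Finset.mem_univ i),
    sum_theta_erase θ y hi]
  have herase : ∑ j ∈ Finset.univ.erase i,
        θ j.succ * (((if j = i then 0 else y j + 1 : ℕ)) : ℝ)
      = ∑ j ∈ Finset.univ.erase i, (θ j.succ * (y j : ℝ) + θ j.succ) :=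
    Finset.sum_congr rfl fun j hj => by
      rw [if_neg (Finset.ne_of_mem_erase hj)]
      push_cast
      ring
  rw [herase, Finset.sum_add_distrib]
  simp only [if_pos rfl]
  push_cast
  ring

lemma real_key (s : ℕ × (Fin k → ℕ)) :
    (if (zeroSet k s.2).card = 1 then
        lam * expWeight k θ (s.1 + 1, fun j => s.2 j - 1)
      else ∑ i ∈ zeroSet k s.2,
        (lam / (zeroSet k s.2).card) * expWeight k θ (s.1, Function.update s.2 i 1))
    + ∑ j ∈ (zeroSet k s.2)ᶜ, μ j * expWeight k θ (s.1, Function.update s.2 j (s.2 j - 1))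
    + ∑ i ∈ zeroSet k s.2, μ i * expWeight k θ
        (if s.1 = 0 then s else (s.1 - 1, fun j => if j = i then 0 else s.2 j + 1))
    = (if s.1 = 0 then gammaZero k lam μ (zeroSet k s.2) θ
        else gammaPlus k lam μ (zeroSet k s.2) θ) * expWeight k θ s := by
  obtain ⟨m, y⟩ := s
  dsimp only
  have h1 : (if (zeroSet k y).card = 1 then
        lam * expWeight k θ (m + 1, fun j => y j - 1)
      else ∑ i ∈ zeroSet k y,
        (lam / (zeroSet k y).card) * expWeight k θ (m, Function.update y i 1))
      = (if (zeroSet k y).card = 1 then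
          lam * Real.exp (θ 0 - ∑ j ∈ (zeroSet k y)ᶜ, θ j.succ)
        else ∑ i ∈ zeroSet k y,
          (lam / (zeroSet k y).card) * Real.exp (θ i.succ)) * expWeight k θ (m, y) := by
    split_ifs with hcard
    · rw [expWeight_E1 θ m y hcard, mul_assoc]
    · rw [Finset.sum_mul]
      refine Finset.sum_congr rfl fun i hi => ?_
      rw [expWeight_E2 θ m y (mem_zeroSet.mp hi), mul_assoc]
  have h2 : ∑ j ∈ (zeroSet k y)ᶜ, μ j * expWeight k θ (m, Function.update y j (y j - 1))
      = (∑ j ∈ (zeroSet k y)ᶜ, μ j * Real.exp (-θ j.succ)) * expWeight k θ (m, y) := by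
    rw [Finset.sum_mul]
    refine Finset.sum_congr rfl fun j hj => ?_
    have hyj : y j ≠ 0 := fun h =>
      (Finset.mem_compl.mp hj) (mem_zeroSet.mpr h)
    rw [expWeight_E3 θ m y hyj, mul_assoc]
  have h3 : ∑ i ∈ zeroSet k y, μ i * expWeight k θ
        (if m = 0 then (m, y) else (m - 1, fun j => if j = i then 0 else y j + 1))
      = (if m = 0 then (∑ i ∈ zeroSet k y, μ i)
          else ∑ i ∈ zeroSet k y,
            μ i * Real.exp (-θ 0 + ∑ j ∈ Finset.univ.erase i, θ j.succ)) * expWeight k θ (m, y) := by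
    rcases m with _ | m'
    · simp [Finset.sum_mul]
    · simp only [Nat.succ_ne_zero, if_false, Nat.succ_sub_one, Finset.sum_mul]
      refine Finset.sum_congr rfl fun i hi => ?_
      rw [expWeight_E4 θ m' y (mem_zeroSet.mp hi), mul_assoc]
  rw [h1, h2, h3]
  rcases m with _ | m'
  · rw [if_pos rfl, if_pos rfl, gammaZero]
    ring
  · rw [if_neg (Nat.succ_ne_zero m'), if_neg (Nat.succ_ne_zero m'), gammaPlus]
    ring

lemma expWeight_nonneg (t : ℕ × (Fin k → ℕ)) : 0 ≤ expWeight k θ t := by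
  rw [expWeight]; exact (Real.exp_pos _).le

lemma ennreal_key (hlam : 0 ≤ lam) (hμ : ∀ i, 0 ≤ μ i) (s : ℕ × (Fin k → ℕ)) :
    ∑' s', ENNReal.ofReal (jsqP k lam μ s s') * ENNReal.ofReal (expWeight k θ s')
      = ENNReal.ofReal ((if s.1 = 0 then gammaZero k lam μ (zeroSet k s.2) θ
          else gammaPlus k lam μ (zeroSet k s.2) θ) * expWeight k θ s) := by
  rw [tsum_jsqP_mul lam μ hlam hμ s (fun s' => ENNReal.ofReal (expWeight k θ s')),
    ← real_key lam μ θ s]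
  have hA : 0 ≤ (if (zeroSet k s.2).card = 1 then
        lam * expWeight k θ (s.1 + 1, fun j => s.2 j - 1)
      else ∑ i ∈ zeroSet k s.2,
        (lam / (zeroSet k s.2).card) * expWeight k θ (s.1, Function.update s.2 i 1)) := by
    split_ifs
    · exact mul_nonneg hlam (expWeight_nonneg θ _)
    · exact Finset.sum_nonneg fun i _ =>
        mul_nonneg (div_nonneg hlam (Nat.cast_nonneg _)) (expWeight_nonneg θ _)
  have hB : 0 ≤ ∑ j ∈ (zeroSet k s.2)ᶜ,
      μ j * expWeight k θ (s.1, Function.update s.2 j (s.2 j - 1)) :=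
    Finset.sum_nonneg fun j _ => mul_nonneg (hμ j) (expWeight_nonneg θ _)
  have hC : 0 ≤ ∑ i ∈ zeroSet k s.2, μ i * expWeight k θ
      (if s.1 = 0 then s else (s.1 - 1, fun j => if j = i then 0 else s.2 j + 1)) :=
    Finset.sum_nonneg fun i _ => mul_nonneg (hμ i) (expWeight_nonneg θ _)
  rw [ENNReal.ofReal_add (add_nonneg hA hB) hC, ENNReal.ofReal_add hA hB]
  congr 1
  · congr 1
    · split_ifs
      · exact (ENNReal.ofReal_mul hlam).symm
      · rw [ENNReal.ofReal_sum_of_nonneg (fun i _ =>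
          mul_nonneg (div_nonneg hlam (Nat.cast_nonneg _)) (expWeight_nonneg θ _))]
        exact Finset.sum_congr rfl fun i _ =>
          (ENNReal.ofReal_mul (div_nonneg hlam (Nat.cast_nonneg _))).symm
    · rw [ENNReal.ofReal_sum_of_nonneg (fun j _ =>
        mul_nonneg (hμ j) (expWeight_nonneg θ _))]
      exact Finset.sum_congr rfl fun j _ => (ENNReal.ofReal_mul (hμ j)).symm
  · rw [ENNReal.ofReal_sum_of_nonneg (fun i _ =>
      mul_nonneg (hμ i) (expWeight_nonneg θ _))]
    exact Finset.sum_congr rfl fun i _ => (ENNReal.ofReal_mul (hμ i)).symm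

lemma ennreal_row (hlam : 0 ≤ lam) (hμ : ∀ i, 0 ≤ μ i) (s : ℕ × (Fin k → ℕ)) :
    ∑' s', ENNReal.ofReal (jsqP k lam μ s s') ≤ ENNReal.ofReal (lam + ∑ i, μ i) := by
  have hkey := tsum_jsqP_mul lam μ hlam hμ s (fun _ => 1)
  simp only [mul_one] at hkey
  rw [hkey]
  have hA : (if (zeroSet k s.2).card = 1 then ENNReal.ofReal lam
      else ∑ x ∈ zeroSet k s.2, ENNReal.ofReal (lam / (zeroSet k s.2).card))
      ≤ ENNReal.ofReal lam := by
    split_ifs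
    · exact le_rfl
    · rw [← ENNReal.ofReal_sum_of_nonneg
        (fun i _ => div_nonneg hlam (Nat.cast_nonneg _))]
      refine ENNReal.ofReal_le_ofReal ?_
      rw [Finset.sum_const, nsmul_eq_mul]
      rcases Nat.eq_zero_or_pos (zeroSet k s.2).card with h0 | hpos
      · simp [h0, hlam]
      · rw [mul_div_cancel₀ _ (by exact_mod_cast hpos.ne' : ((zeroSet k s.2).card : ℝ) ≠ 0)]
  have hB : ∑ x ∈ (zeroSet k s.2)ᶜ, ENNReal.ofReal (μ x)
      = ENNReal.ofReal (∑ j ∈ (zeroSet k s.2)ᶜ, μ j) :=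
    (ENNReal.ofReal_sum_of_nonneg (fun j _ => hμ j)).symm
  have hC : ∑ x ∈ zeroSet k s.2, ENNReal.ofReal (μ x)
      = ENNReal.ofReal (∑ i ∈ zeroSet k s.2, μ i) :=
    (ENNReal.ofReal_sum_of_nonneg (fun i _ => hμ i)).symm
  refine le_trans (add_le_add (add_le_add hA (le_of_eq hB)) (le_of_eq hC)) (le_of_eq ?_)
  rw [add_assoc, ← ENNReal.ofReal_add (Finset.sum_nonneg fun j _ => hμ j)
      (Finset.sum_nonneg fun i _ => hμ i),
    ← ENNReal.ofReal_add hlam (add_nonneg (Finset.sum_nonneg fun j _ => hμ j)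
      (Finset.sum_nonneg fun i _ => hμ i)), Finset.sum_compl_add_sum]

lemma jsqP_nonneg (hlam : 0 ≤ lam) (hμ : ∀ i, 0 ≤ μ i) (s s' : ℕ × (Fin k → ℕ)) :
    0 ≤ jsqP k lam μ s s' := by
  rw [jsqP]
  refine add_nonneg (add_nonneg ?_ ?_) ?_
  · by_cases hcard : (zeroSet k s.2).card = 1
    · rw [if_pos hcard]; split_ifs <;> simp [hlam]
    · rw [if_neg hcard]
      exact Finset.sum_nonneg fun i _ => by
        split_ifs <;> simp [div_nonneg hlam (Nat.cast_nonneg _)]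
  · exact Finset.sum_nonneg fun j _ => by split_ifs <;> simp [hμ j]
  · exact Finset.sum_nonneg fun i _ => by split_ifs <;> simp [hμ i]

lemma jsqP_le (hlam : 0 ≤ lam) (hμ : ∀ i, 0 ≤ μ i) (s s' : ℕ × (Fin k → ℕ)) :
    jsqP k lam μ s s' ≤ lam + ∑ i, μ i := by
  rw [jsqP]
  have hA : (if (zeroSet k s.2).card = 1 then
        (if s' = (s.1 + 1, fun j => s.2 j - 1) then lam else 0)
      else ∑ i ∈ zeroSet k s.2,
        (if s' = (s.1, Function.update s.2 i 1) then lam / (zeroSet k s.2).card else 0)) ≤ lam := by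
    by_cases hcard : (zeroSet k s.2).card = 1
    · rw [if_pos hcard]; split_ifs <;> simp [hlam]
    · rw [if_neg hcard]
      refine le_trans (Finset.sum_le_sum (g := fun _ => lam / (zeroSet k s.2).card)
        fun i _ => by split_ifs <;> simp [div_nonneg hlam (Nat.cast_nonneg _)]) ?_
      rw [Finset.sum_const, nsmul_eq_mul]
      rcases Nat.eq_zero_or_pos (zeroSet k s.2).card with h0 | hpos
      · simp [h0, hlam]
      · rw [mul_div_cancel₀ _ (by exact_mod_cast hpos.ne' : ((zeroSet k s.2).card : ℝ) ≠ 0)]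
  have hB : ∑ j ∈ (zeroSet k s.2)ᶜ,
      (if s' = (s.1, Function.update s.2 j (s.2 j - 1)) then μ j else 0)
      ≤ ∑ j ∈ (zeroSet k s.2)ᶜ, μ j :=
    Finset.sum_le_sum fun j _ => by split_ifs <;> simp [hμ j]
  have hC : ∑ i ∈ zeroSet k s.2,
      (if s' = (if s.1 = 0 then s else (s.1 - 1, fun j => if j = i then 0 else s.2 j + 1))
        then μ i else 0) ≤ ∑ i ∈ zeroSet k s.2, μ i :=
    Finset.sum_le_sum fun i _ => by split_ifs <;> simp [hμ i]
  have hsum := Finset.sum_compl_add_sum (zeroSet k s.2) μ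
  linarith

end JSQAux


/-- **Finiteness of the full stationary mgf:** under either set of conditions (a) or (b)
of the stationary-inequality lemma, `φ(θ) < ∞`. -/
theorem jsq_phi_finite_of_stationary_inequality
    (k : ℕ) (hk : 2 ≤ k) (lam : ℝ) (μ : Fin k → ℝ)
    (hlam : 0 < lam) (hμ : ∀ i, 0 < μ i)
    (hnorm : lam + ∑ i, μ i = 1)
    (hρ : rho k lam μ < 1)
    (π : ℕ × (Fin k → ℕ) → ℝ)
    (hπnn : ∀ s, 0 ≤ π s)
    (hπsupp : ∀ s, π s ≠ 0 → ∃ i : Fin k, s.2 i = 0)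
    (hπsum : HasSum π 1)
    (hπstat : ∀ s', (∑' s, π s * jsqP k lam μ s s') = π s')
    (θ : Fin (k + 1) → ℝ)
    (hab : (∀ U : Finset (Fin k), U.Nonempty →
              phiZero k π U θ < ⊤ ∧ 0 < 1 - gammaPlus k lam μ U θ) ∨
           (∃ A : Finset (Finset (Fin k)), (∀ U ∈ A, Finset.Nonempty U) ∧
              (∀ U : Finset (Fin k), U.Nonempty → U ∉ A →
                gammaPlus k lam μ U θ < 1 ∧ gammaZero k lam μ U θ < 1) ∧
              (∀ U ∈ A, phiPlus k π U θ < ⊤ ∧ phiZero k π U θ < ⊤))) :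
    phi k π θ < ⊤ := by
  classical
  have hlam' : 0 ≤ lam := hlam.le
  have hμ' : ∀ i, 0 ≤ μ i := fun i => (hμ i).le
  -- γf s : the one-step increment mgf from state s
  set γf : ℕ × (Fin k → ℕ) → ℝ := fun s =>
    if s.1 = 0 then gammaZero k lam μ (zeroSet k s.2) θ
    else gammaPlus k lam μ (zeroSet k s.2) θ with hγf
  suffices h : ∀ (Good : ℕ × (Fin k → ℕ) → Prop) (c : ℝ), 0 ≤ c → c < 1 →
      (∀ s, π s ≠ 0 → ¬ Good s → γf s ≤ c) →
      (∑' s, if Good s then ENNReal.ofReal (π s) * ENNReal.ofReal (expWeight k θ s) else 0) ≠ ⊤ →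
      phi k π θ < ⊤ by
    rcases hab with ha | ⟨A, hAne, hAgam, hAfin⟩
    · -- case (a)
      set V : Finset ℝ := insert 0
        (((Finset.univ : Finset (Finset (Fin k))).filter (fun U => U.Nonempty)).image
          (fun U => gammaPlus k lam μ U θ)) with hV
      have hVne : V.Nonempty := Finset.insert_nonempty _ _
      set c : ℝ := V.max' hVne with hc
      have hc0 : 0 ≤ c := Finset.le_max' V 0 (Finset.mem_insert_self _ _)
      have hc1 : c < 1 := by
        rw [hc, Finset.max'_lt_iff]
        intro x hx
        rcases Finset.mem_insert.mp hx with h0 | hx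
        · rw [h0]; norm_num
        · obtain ⟨U, hU, rfl⟩ := Finset.mem_image.mp hx
          have := (ha U (Finset.mem_filter.mp hU).2).2
          linarith
      refine h (fun s => s.1 = 0) c hc0 hc1 ?_ ?_
      · intro s hπs hGood
        have hz : (zeroSet k s.2).Nonempty := by
          obtain ⟨i, hi⟩ := hπsupp s hπs
          exact ⟨i, mem_zeroSet.mpr hi⟩
        have heq : γf s = gammaPlus k lam μ (zeroSet k s.2) θ := by
          simp only [hγf]
          rw [if_neg hGood]
        rw [heq]
        exact Finset.le_max' V _ (Finset.mem_insert_of_mem (Finset.mem_image.mpr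
          ⟨zeroSet k s.2, Finset.mem_filter.mpr ⟨Finset.mem_univ _, hz⟩, rfl⟩))
      · -- K finite in case (a)
        have hfin : (∑ U ∈ (Finset.univ : Finset (Finset (Fin k))).filter
            (fun U => U.Nonempty), phiZero k π U θ) ≠ ⊤ :=
          (ENNReal.sum_lt_top.mpr fun U hU => (ha U (Finset.mem_filter.mp hU).2).1).ne
        refine ne_top_of_le_ne_top hfin ?_
        have hsw : ∑ U ∈ (Finset.univ : Finset (Finset (Fin k))).filter (fun U => U.Nonempty),
            phiZero k π U θ
            = ∑' s, ∑ U ∈ (Finset.univ : Finset (Finset (Fin k))).filter (fun U => U.Nonempty),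
              (if s.1 = 0 ∧ zeroSet k s.2 = U
                then ENNReal.ofReal (π s * expWeight k θ s) else 0) := by
          rw [Summable.tsum_finsetSum (fun _ _ => ENNReal.summable)]
          rfl
        rw [hsw]
        refine ENNReal.tsum_le_tsum fun s => ?_
        by_cases hm : s.1 = 0
        · by_cases hπs : π s = 0
          · simp [hπs]
          · have hz : (zeroSet k s.2).Nonempty := by
              obtain ⟨i, hi⟩ := hπsupp s hπs
              exact ⟨i, mem_zeroSet.mpr hi⟩
            refine le_trans (le_of_eq ?_) (Finset.single_le_sum (f := fun U =>
              (if s.1 = 0 ∧ zeroSet k s.2 = U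
                then ENNReal.ofReal (π s * expWeight k θ s) else 0))
              (fun U _ => zero_le)
              (Finset.mem_filter.mpr ⟨Finset.mem_univ (zeroSet k s.2), hz⟩))
            simp [hm, ENNReal.ofReal_mul (hπnn s)]
        · simp [hm]
    · -- case (b)
      set V : Finset ℝ := insert 0
        (((Finset.univ : Finset (Finset (Fin k))).filter (fun U => U.Nonempty ∧ U ∉ A)).image
          (fun U => max (gammaPlus k lam μ U θ) (gammaZero k lam μ U θ))) with hV
      have hVne : V.Nonempty := Finset.insert_nonempty _ _
      set c : ℝ := V.max' hVne with hc
      have hc0 : 0 ≤ c := Finset.le_max' V 0 (Finset.mem_insert_self _ _)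
      have hc1 : c < 1 := by
        rw [hc, Finset.max'_lt_iff]
        intro x hx
        rcases Finset.mem_insert.mp hx with h0 | hx
        · rw [h0]; norm_num
        · obtain ⟨U, hU, rfl⟩ := Finset.mem_image.mp hx
          have h2 := hAgam U (Finset.mem_filter.mp hU).2.1 (Finset.mem_filter.mp hU).2.2
          exact max_lt h2.1 h2.2
      refine h (fun s => zeroSet k s.2 ∈ A) c hc0 hc1 ?_ ?_
      · intro s hπs hGood
        have hz : (zeroSet k s.2).Nonempty := by
          obtain ⟨i, hi⟩ := hπsupp s hπs
          exact ⟨i, mem_zeroSet.mpr hi⟩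
        have hmax := Finset.le_max' V _ (Finset.mem_insert_of_mem (Finset.mem_image.mpr
          ⟨zeroSet k s.2, Finset.mem_filter.mpr ⟨Finset.mem_univ _, hz, hGood⟩, rfl⟩))
        simp only [hγf]
        split_ifs
        · exact le_trans (le_max_right _ _) hmax
        · exact le_trans (le_max_left _ _) hmax
      · -- K finite in case (b)
        have hfin : (∑ U ∈ A, (phiPlus k π U θ + phiZero k π U θ)) ≠ ⊤ :=
          (ENNReal.sum_lt_top.mpr fun U hU =>
            ENNReal.add_lt_top.mpr ⟨(hAfin U hU).1, (hAfin U hU).2⟩).ne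
        refine ne_top_of_le_ne_top hfin ?_
        have hsw : ∑ U ∈ A, (phiPlus k π U θ + phiZero k π U θ)
            = ∑' s, ∑ U ∈ A,
              ((if 1 ≤ s.1 ∧ zeroSet k s.2 = U
                  then ENNReal.ofReal (π s * expWeight k θ s) else 0)
                + (if s.1 = 0 ∧ zeroSet k s.2 = U
                  then ENNReal.ofReal (π s * expWeight k θ s) else 0)) := by
          rw [Summable.tsum_finsetSum (fun _ _ => ENNReal.summable)]
          refine Finset.sum_congr rfl fun U _ => ?_
          rw [phiPlus, phiZero, ← ENNReal.tsum_add]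
        rw [hsw]
        refine ENNReal.tsum_le_tsum fun s => ?_
        by_cases hmem : zeroSet k s.2 ∈ A
        · refine le_trans ?_ (Finset.single_le_sum (f := fun U =>
            ((if 1 ≤ s.1 ∧ zeroSet k s.2 = U
                then ENNReal.ofReal (π s * expWeight k θ s) else 0)
              + (if s.1 = 0 ∧ zeroSet k s.2 = U
                then ENNReal.ofReal (π s * expWeight k θ s) else 0)))
            (fun U _ => zero_le) hmem)
          by_cases hm : s.1 = 0
          · simp [hm, hmem, ENNReal.ofReal_mul (hπnn s)]
          · simp [hm, hmem, Nat.one_le_iff_ne_zero, ENNReal.ofReal_mul (hπnn s)]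
        · simp [hmem]
  -- main argument
  intro Good c hc0 hc1 hGoodγ hK
  set F : ℕ × (Fin k → ℕ) → ℝ≥0∞ := fun s => ENNReal.ofReal (expWeight k θ s) with hF
  set q : ℕ × (Fin k → ℕ) → ℝ≥0∞ := fun s => ENNReal.ofReal (π s) with hq
  set p : ℕ × (Fin k → ℕ) → ℕ × (Fin k → ℕ) → ℝ≥0∞ :=
    fun s s' => ENNReal.ofReal (jsqP k lam μ s s') with hp
  have hmass : ∑' s, q s = 1 := by
    simp only [hq]
    rw [← ENNReal.ofReal_tsum_of_nonneg hπnn ⟨1, hπsum⟩, hπsum.tsum_eq, ENNReal.ofReal_one]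
  have hple1 : ∀ s s', jsqP k lam μ s s' ≤ 1 := fun s s' => by
    have := jsqP_le lam μ hlam' hμ' s s'
    rwa [hnorm] at this
  have hstat : ∀ s', ∑' s, q s * p s s' = q s' := by
    intro s'
    have hsummable : Summable fun s => π s * jsqP k lam μ s s' :=
      Summable.of_nonneg_of_le
        (fun s => mul_nonneg (hπnn s) (jsqP_nonneg lam μ hlam' hμ' s s'))
        (fun s => mul_le_of_le_one_right (hπnn s) (hple1 s s')) ⟨1, hπsum⟩
    calc ∑' s, q s * p s s' = ∑' s, ENNReal.ofReal (π s * jsqP k lam μ s s') :=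
        tsum_congr fun s => (ENNReal.ofReal_mul (hπnn s)).symm
      _ = ENNReal.ofReal (∑' s, π s * jsqP k lam μ s s') :=
        (ENNReal.ofReal_tsum_of_nonneg
          (fun s => mul_nonneg (hπnn s) (jsqP_nonneg lam μ hlam' hμ' s s')) hsummable).symm
      _ = q s' := by rw [hπstat s']
  have key : ∀ s, ∑' s', p s s' * F s' = ENNReal.ofReal (γf s * expWeight k θ s) := by
    intro s
    have h1 := ennreal_key lam μ θ hlam' hμ' s
    simp only [hp, hF, hγf]
    exact h1
  -- the uniform upper bound C on γf
  set Cv : Finset ℝ := insert 1 ((Finset.univ : Finset (Finset (Fin k))).image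
    (fun U => max (gammaPlus k lam μ U θ) (gammaZero k lam μ U θ))) with hCv
  set C : ℝ := Cv.max' (Finset.insert_nonempty _ _) with hC
  have hC0 : 0 ≤ C := le_trans zero_le_one (Finset.le_max' _ 1 (Finset.mem_insert_self _ _))
  have hCγ : ∀ s, γf s ≤ C := by
    intro s
    have hmem : max (gammaPlus k lam μ (zeroSet k s.2) θ)
        (gammaZero k lam μ (zeroSet k s.2) θ) ∈ Cv :=
      Finset.mem_insert_of_mem (Finset.mem_image.mpr ⟨_, Finset.mem_univ _, rfl⟩)
    have hle := Finset.le_max' Cv _ hmem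
    simp only [hγf]
    split_ifs
    · exact le_trans (le_max_right _ _) hle
    · exact le_trans (le_max_left _ _) hle
  set K : ℝ≥0∞ := ∑' s, if Good s then q s * F s else 0 with hKdef
  set M : ℝ≥0∞ := ENNReal.ofReal C * K with hM
  have hMne : M ≠ ⊤ := ENNReal.mul_ne_top ENNReal.ofReal_ne_top hK
  have hsplit : ∀ (P : ℕ × (Fin k → ℕ) → Prop) (g : ℕ × (Fin k → ℕ) → ℝ≥0∞),
      ∑' s, g s = (∑' s, if P s then g s else 0) + ∑' s, if ¬ P s then g s else 0 := by
    intro P g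
    rw [← ENNReal.tsum_add]
    exact tsum_congr fun s => by by_cases h : P s <;> simp [h]
  have hTbound : ∀ n : ℕ,
      (∑' s, if ¬ Good s ∧ expWeight k θ s < (n : ℝ) then q s * F s else 0)
        ≤ ENNReal.ofReal (M.toReal / (1 - c)) := by
    intro n
    set G : ℕ × (Fin k → ℕ) → ℝ≥0∞ :=
      fun s => ENNReal.ofReal (min (expWeight k θ s) (n : ℝ)) with hG
    set T : ℝ≥0∞ := ∑' s, if ¬ Good s ∧ expWeight k θ s < (n : ℝ) then q s * F s else 0 with hT
    have hGle : ∀ s, G s ≤ ENNReal.ofReal (n : ℝ) :=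
      fun s => ENNReal.ofReal_le_ofReal (min_le_right _ _)
    have hGleF : ∀ s, G s ≤ F s := fun s => ENNReal.ofReal_le_ofReal (min_le_left _ _)
    have hstatG : ∑' s, q s * G s = ∑' s, q s * ∑' s', p s s' * G s' := by
      calc ∑' s, q s * G s
          = ∑' s, (∑' s₀, q s₀ * p s₀ s) * G s := tsum_congr fun s => by rw [hstat s]
        _ = ∑' s, ∑' s₀, q s₀ * p s₀ s * G s := tsum_congr fun s => ENNReal.tsum_mul_right.symm
        _ = ∑' s₀, ∑' s, q s₀ * p s₀ s * G s := ENNReal.tsum_comm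
        _ = ∑' s₀, q s₀ * ∑' s, p s₀ s * G s := tsum_congr fun s₀ => by
            rw [← ENNReal.tsum_mul_left]
            exact tsum_congr fun s => mul_assoc _ _ _
    have hPGn : ∀ s, ∑' s', p s s' * G s' ≤ ENNReal.ofReal (n : ℝ) := by
      intro s
      calc ∑' s', p s s' * G s' ≤ ∑' s', p s s' * ENNReal.ofReal (n : ℝ) :=
          ENNReal.tsum_le_tsum fun s' => mul_le_mul_right (hGle s') _
        _ = (∑' s', p s s') * ENNReal.ofReal (n : ℝ) := ENNReal.tsum_mul_right
        _ ≤ 1 * ENNReal.ofReal (n : ℝ) := by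
            gcongr
            have hrow := ennreal_row lam μ hlam' hμ' s
            rw [hnorm, ENNReal.ofReal_one] at hrow
            exact hrow
        _ = ENNReal.ofReal (n : ℝ) := one_mul _
    have hPGγ : ∀ s, ∑' s', p s s' * G s' ≤ ENNReal.ofReal (γf s * expWeight k θ s) := by
      intro s
      refine le_trans (ENNReal.tsum_le_tsum fun s' => mul_le_mul_right (hGleF s') _) ?_
      rw [key s]
    have htot : ∑' s, q s * G s ≤ ENNReal.ofReal (n : ℝ) := by
      calc ∑' s, q s * G s ≤ ∑' s, q s * ENNReal.ofReal (n : ℝ) :=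
          ENNReal.tsum_le_tsum fun s => mul_le_mul_right (hGle s) _
        _ = (∑' s, q s) * ENNReal.ofReal (n : ℝ) := ENNReal.tsum_mul_right
        _ = ENNReal.ofReal (n : ℝ) := by rw [hmass, one_mul]
    -- R2 ≤ Σ2
    have hR2 : (∑' s, if ¬ expWeight k θ s < (n : ℝ) then q s * ∑' s', p s s' * G s' else 0)
        ≤ ∑' s, if ¬ expWeight k θ s < (n : ℝ) then q s * G s else 0 := by
      refine ENNReal.tsum_le_tsum fun s => ?_
      by_cases h : expWeight k θ s < (n : ℝ)
      · simp [h]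
      · rw [if_pos h, if_pos h]
        refine mul_le_mul_right ?_ _
        refine le_trans (hPGn s) (le_of_eq ?_)
        simp only [hG]
        rw [min_eq_right (not_lt.mp h)]
    -- R1 ≤ c·T + M
    have hR1 : (∑' s, if expWeight k θ s < (n : ℝ) then q s * ∑' s', p s s' * G s' else 0)
        ≤ ENNReal.ofReal c * T + M := by
      have hpt : ∀ s, (if expWeight k θ s < (n : ℝ) then q s * ∑' s', p s s' * G s' else 0)
          ≤ ENNReal.ofReal c *
              (if ¬ Good s ∧ expWeight k θ s < (n : ℝ) then q s * F s else 0)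
            + ENNReal.ofReal C * (if Good s then q s * F s else 0) := by
        intro s
        by_cases hPns : expWeight k θ s < (n : ℝ)
        · rw [if_pos hPns]
          by_cases hπs : π s = 0
          · have hq0 : q s = 0 := by simp [hq, hπs]
            simp [hq0]
          · refine le_trans (mul_le_mul_right (hPGγ s) _) ?_
            by_cases hGs : Good s
            · refine le_trans ?_ (le_add_left le_rfl)
              rw [if_pos hGs]
              calc q s * ENNReal.ofReal (γf s * expWeight k θ s)
                  ≤ q s * ENNReal.ofReal (C * expWeight k θ s) := by
                    refine mul_le_mul_right (ENNReal.ofReal_le_ofReal ?_) _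
                    exact mul_le_mul_of_nonneg_right (hCγ s) (expWeight_nonneg θ s)
                _ = ENNReal.ofReal C * (q s * F s) := by
                    rw [ENNReal.ofReal_mul hC0]
                    simp only [hF]
                    ring
            · refine le_trans ?_ (le_add_right le_rfl)
              rw [if_pos ⟨hGs, hPns⟩]
              calc q s * ENNReal.ofReal (γf s * expWeight k θ s)
                  ≤ q s * ENNReal.ofReal (c * expWeight k θ s) := by
                    refine mul_le_mul_right (ENNReal.ofReal_le_ofReal ?_) _
                    exact mul_le_mul_of_nonneg_right (hGoodγ s hπs hGs) (expWeight_nonneg θ s)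
                _ = ENNReal.ofReal c * (q s * F s) := by
                    rw [ENNReal.ofReal_mul hc0]
                    simp only [hF]
                    ring
        · rw [if_neg hPns]
          exact zero_le
      calc (∑' s, if expWeight k θ s < (n : ℝ) then q s * ∑' s', p s s' * G s' else 0)
          ≤ ∑' s, (ENNReal.ofReal c *
              (if ¬ Good s ∧ expWeight k θ s < (n : ℝ) then q s * F s else 0)
            + ENNReal.ofReal C * (if Good s then q s * F s else 0)) :=
          ENNReal.tsum_le_tsum hpt
        _ = ENNReal.ofReal c * T + M := by
            rw [ENNReal.tsum_add, ENNReal.tsum_mul_left, ENNReal.tsum_mul_left]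
    -- assemble
    have hS2le : (∑' s, if ¬ expWeight k θ s < (n : ℝ) then q s * G s else 0)
        ≤ ENNReal.ofReal (n : ℝ) := by
      refine le_trans ?_ htot
      refine ENNReal.tsum_le_tsum fun s => ?_
      by_cases h : expWeight k θ s < (n : ℝ) <;> simp [h]
    have hS2ne : (∑' s, if ¬ expWeight k θ s < (n : ℝ) then q s * G s else 0) ≠ ⊤ :=
      ne_top_of_le_ne_top ENNReal.ofReal_ne_top hS2le
    have hchain : (∑' s, if expWeight k θ s < (n : ℝ) then q s * G s else 0)
        + (∑' s, if ¬ expWeight k θ s < (n : ℝ) then q s * G s else 0)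
        ≤ (ENNReal.ofReal c * T + M)
          + (∑' s, if ¬ expWeight k θ s < (n : ℝ) then q s * G s else 0) := by
      calc (∑' s, if expWeight k θ s < (n : ℝ) then q s * G s else 0)
          + (∑' s, if ¬ expWeight k θ s < (n : ℝ) then q s * G s else 0)
          = ∑' s, q s * G s := (hsplit _ _).symm
        _ = ∑' s, q s * ∑' s', p s s' * G s' := hstatG
        _ = (∑' s, if expWeight k θ s < (n : ℝ) then q s * ∑' s', p s s' * G s' else 0)
            + (∑' s, if ¬ expWeight k θ s < (n : ℝ) then q s * ∑' s', p s s' * G s' else 0) :=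
          hsplit _ _
        _ ≤ _ := add_le_add hR1 hR2
    have hS1 : (∑' s, if expWeight k θ s < (n : ℝ) then q s * G s else 0)
        ≤ ENNReal.ofReal c * T + M := (ENNReal.add_le_add_iff_right hS2ne).mp hchain
    have hTS1 : T ≤ ∑' s, if expWeight k θ s < (n : ℝ) then q s * G s else 0 := by
      rw [hT]
      refine ENNReal.tsum_le_tsum fun s => ?_
      by_cases h1 : ¬ Good s ∧ expWeight k θ s < (n : ℝ)
      · rw [if_pos h1, if_pos h1.2]
        refine mul_le_mul_right (le_of_eq ?_) _
        simp only [hF, hG]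
        rw [min_eq_left h1.2.le]
      · rw [if_neg h1]
        exact zero_le
    have hTineq : T ≤ ENNReal.ofReal c * T + M := le_trans hTS1 hS1
    have hTne : T ≠ ⊤ := by
      have hle2 : T ≤ ENNReal.ofReal (n : ℝ) := by
        refine le_trans hTS1 (le_trans ?_ htot)
        refine ENNReal.tsum_le_tsum fun s => ?_
        by_cases h : expWeight k θ s < (n : ℝ) <;> simp [h]
      exact ne_top_of_le_ne_top ENNReal.ofReal_ne_top hle2
    have hrhsne : ENNReal.ofReal c * T + M ≠ ⊤ :=
      ENNReal.add_ne_top.mpr ⟨ENNReal.mul_ne_top ENNReal.ofReal_ne_top hTne, hMne⟩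
    have htr : T.toReal ≤ c * T.toReal + M.toReal := by
      have h2 := ENNReal.toReal_mono hrhsne hTineq
      rwa [ENNReal.toReal_add (ENNReal.mul_ne_top ENNReal.ofReal_ne_top hTne) hMne,
        ENNReal.toReal_mul, ENNReal.toReal_ofReal hc0] at h2
    have hfinal : T.toReal ≤ M.toReal / (1 - c) := by
      rw [le_div_iff₀ (by linarith : (0:ℝ) < 1 - c)]
      nlinarith
    calc T = ENNReal.ofReal T.toReal := (ENNReal.ofReal_toReal hTne).symm
      _ ≤ ENNReal.ofReal (M.toReal / (1 - c)) := ENNReal.ofReal_le_ofReal hfinal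
  -- from the uniform bound to the full bad part
  have hBadfin : (∑' s, if ¬ Good s then q s * F s else 0)
      ≤ ENNReal.ofReal (M.toReal / (1 - c)) := by
    rw [ENNReal.tsum_eq_iSup_sum]
    refine iSup_le fun Fs => ?_
    set n : ℕ := (Fs.sup fun s => ⌈expWeight k θ s⌉₊) + 1 with hn
    have hflt : ∀ s ∈ Fs, expWeight k θ s < (n : ℝ) := by
      intro s hs
      have h1 : expWeight k θ s ≤ (⌈expWeight k θ s⌉₊ : ℝ) := Nat.le_ceil _
      have h2 : ((⌈expWeight k θ s⌉₊ : ℕ) : ℝ) ≤ ((Fs.sup fun s => ⌈expWeight k θ s⌉₊ : ℕ) : ℝ) :=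
        Nat.cast_le.mpr (Finset.le_sup (f := fun s => ⌈expWeight k θ s⌉₊) hs)
      have h3 : ((Fs.sup fun s => ⌈expWeight k θ s⌉₊ : ℕ) : ℝ) < (n : ℝ) := by
        rw [hn]
        push_cast
        linarith
      linarith
    refine le_trans ?_ (hTbound n)
    refine le_trans (Finset.sum_le_sum (fun s hs => ?_)) (ENNReal.sum_le_tsum Fs)
    by_cases hGs : Good s
    · simp [hGs]
    · rw [if_pos hGs, if_pos (⟨hGs, hflt s hs⟩ : ¬ Good s ∧ expWeight k θ s < (n : ℝ))]
  -- conclude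
  have hphi : phi k π θ = K + (∑' s, if ¬ Good s then q s * F s else 0) := by
    rw [phi, hKdef]
    rw [← hsplit Good (fun s => q s * F s)]
    exact tsum_congr fun s => by
      rw [ENNReal.ofReal_mul (hπnn s)]
  rw [hphi]
  exact ENNReal.add_lt_top.mpr ⟨lt_top_iff_ne_top.mpr hK,
    lt_of_le_of_lt hBadfin ENNReal.ofReal_lt_top⟩
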